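/- arXiv:1211.1754 — 2 statements merged into one kernel-verified Lean document; each statement's English description precedes it below -/
import Mathlib

section
/- Let A be a commutative ring of prime characteristic p, let e₁, ..., e_m ∈ A be pairwise orthogonal idempotents summing to 1, let x ∈ A, and suppose for each j there is c_j ∈ A with c_j^p = c_j such that (x - c_j)^{p^s} e_j = 0. Then x^{p^{s+1}} = x^{p^s}. -/
theorem stmt10 (p : ℕ) [Fact p.Prime] (A : Type*) [CommRing A] [CharP A p]
    (m : ℕ) (E : Fin m → A)
    (hidem : ∀ j, E j * E j = E j)
    (horth : ∀ i j, i ≠ j → E i * E j = 0)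
    (hsum : ∑ j, E j = 1)
    (x : A) (c : Fin m → A) (hc : ∀ j, (c j) ^ p = c j)
    (s : ℕ) (h : ∀ j, (x - c j) ^ (p ^ s) * E j = 0) :
    x ^ (p ^ (s + 1)) = x ^ (p ^ s) := by
  have hcpow : ∀ j (k : ℕ), (c j) ^ (p ^ k) = c j := by
    intro j k
    induction k with
    | zero => simp
    | succ n ih => rw [pow_succ, pow_mul, ih, hc]
  have hsub : ∀ j (k : ℕ), (x - c j) ^ (p ^ k) = x ^ (p ^ k) - c j := by
    intro j k
    rw [sub_pow_char_pow, hcpow]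
  have hle : p ^ s ≤ p ^ (s + 1) :=
    Nat.pow_le_pow_right (Nat.Prime.pos Fact.out) (Nat.le_succ s)
  have key : ∀ j, (x ^ (p ^ (s + 1)) - x ^ (p ^ s)) * E j = 0 := by
    intro j
    have h1 : (x - c j) ^ (p ^ (s + 1)) * E j = 0 := by
      have hsplit : p ^ (s + 1) = (p ^ (s + 1) - p ^ s) + p ^ s := by omega
      rw [hsplit, pow_add, mul_assoc, h j, mul_zero]
    have h2 := h j
    rw [hsub] at h1 h2
    have heq : (x ^ (p ^ (s + 1)) - x ^ (p ^ s)) * E j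
        = (x ^ (p ^ (s + 1)) - c j) * E j - (x ^ (p ^ s) - c j) * E j := by ring
    rw [heq, h1, h2, sub_zero]
  have hzero : x ^ (p ^ (s + 1)) - x ^ (p ^ s) = 0 := by
    calc x ^ (p ^ (s + 1)) - x ^ (p ^ s)
        = (x ^ (p ^ (s + 1)) - x ^ (p ^ s)) * 1 := by ring
      _ = 0 := by
          rw [← hsum, Finset.mul_sum]
          exact Finset.sum_eq_zero fun j _ => key j
  exact sub_eq_zero.mp hzero
end

section
/- Let p be a prime, F a field of characteristic p, A a commutative F-algebra, e ∈ A an idempotent, x ∈ A, and i ∈ 𝔽_p× with (x - i)^{p^{l-1}} e ≠ 0. Then for every s ≥ 0, x^{p^s} e ≠ x^{p^s + p^{l-1}(p-1)} e; in particular x^{p^s} ≠ x^{p^s + p^{l-1}(p-1)}. -/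
private lemma fix_pow_pow {R : Type*} [CommRing R] (p : ℕ) (z : R)
    (hfix : z ^ p = z) : ∀ j, z ^ (p ^ j) = z := by
  intro j
  induction j with
  | zero => simp
  | succ j ih => rw [pow_succ, pow_mul, ih, hfix]

private lemma nilp_fix_eq_zero {R : Type*} [CommRing R] (p : ℕ) (hp : 1 < p) (z : R)
    (hz : IsNilpotent z) (hfix : z ^ p = z) : z = 0 := by
  obtain ⟨k, hk⟩ := hz
  have hkp : k ≤ p ^ k := le_of_lt (Nat.lt_pow_self (n := k) hp)
  calc z = z ^ (p ^ k) := (fix_pow_pow p z hfix k).symm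
    _ = 0 := pow_eq_zero_of_le hkp hk

theorem stmt13 (p : ℕ) [Fact p.Prime] (F : Type*) [Field F] [CharP F p]
    (A : Type*) [CommRing A] [Algebra F A]
    (e : A) (hidem : e * e = e) (x : A)
    (i : ZMod p) (hi : i ≠ 0) (l : ℕ) (hl : 1 ≤ l)
    (hnil : ∃ l' : ℕ,
      (x - algebraMap F A (ZMod.castHom (dvd_refl p) F i)) ^ (p ^ l') * e = 0)
    (hne : (x - algebraMap F A (ZMod.castHom (dvd_refl p) F i)) ^ (p ^ (l - 1)) * e ≠ 0) :
    ∀ s : ℕ, x ^ (p ^ s) * e ≠ x ^ (p ^ s + p ^ (l - 1) * (p - 1)) * e ∧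
      x ^ (p ^ s) ≠ x ^ (p ^ s + p ^ (l - 1) * (p - 1)) := by
  have hp : p.Prime := Fact.out
  set c : A := algebraMap F A (ZMod.castHom (dvd_refl p) F i) with hcdef
  -- the annihilator ideal of e
  let I : Ideal A :=
    { carrier := {a | a * e = 0}
      add_mem' := by
        intro a b ha hb
        simp only [Set.mem_setOf_eq] at *
        rw [add_mul, ha, hb, add_zero]
      zero_mem' := by simp
      smul_mem' := by
        intro r a ha
        simp only [Set.mem_setOf_eq, smul_eq_mul] at *
        rw [mul_assoc, ha, mul_zero] }
  have hmemI : ∀ a : A, a ∈ I ↔ a * e = 0 := fun a => Iff.rfl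
  have he : e ≠ 0 := by
    intro h; apply hne; rw [h, mul_zero]
  have hItop : I ≠ ⊤ := by
    intro h
    have : (1 : A) ∈ I := h ▸ Submodule.mem_top
    rw [hmemI, one_mul] at this
    exact he this
  haveI : Nontrivial (A ⧸ I) := Ideal.Quotient.nontrivial_iff.mpr hItop
  haveI : CharP (A ⧸ I) p :=
    charP_of_injective_algebraMap (algebraMap F (A ⧸ I)).injective p
  set π : A →+* A ⧸ I := Ideal.Quotient.mk I with hπdef
  -- c ^ p = c
  have hiF : (ZMod.castHom (dvd_refl p) F i) ≠ 0 := by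
    intro h
    exact hi ((ZMod.castHom (dvd_refl p) F).injective (by simpa using h))
  have hcp : c ^ p = c := by
    rw [hcdef, ← map_pow, ← map_pow, ZMod.pow_card]
  set X : A ⧸ I := π x with hXdef
  set n : A ⧸ I := π x - π c with hndef
  have hXn : X = π c + n := by rw [hndef]; ring
  -- n is nilpotent
  obtain ⟨l', hl'⟩ := hnil
  have hn_nil : n ^ (p ^ l') = 0 := by
    rw [hndef, ← map_sub, ← map_pow, hπdef, Ideal.Quotient.eq_zero_iff_mem, hmemI]
    exact hl'
  have hn_isnil : IsNilpotent n := ⟨p ^ l', hn_nil⟩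
  -- n ^ p ^ (l-1) ≠ 0
  have hnm_ne : n ^ (p ^ (l - 1)) ≠ 0 := by
    intro h0
    apply hne
    rw [hndef, ← map_sub, ← map_pow, hπdef, Ideal.Quotient.eq_zero_iff_mem, hmemI] at h0
    exact h0
  -- π c is a unit
  have hcu : IsUnit (π c) := by
    have : IsUnit (ZMod.castHom (dvd_refl p) F i) := isUnit_iff_ne_zero.mpr hiF
    exact (this.map (algebraMap F A)).map π
  have hXu : IsUnit X := by
    rw [hXn]
    exact hn_isnil.isUnit_add_left_of_commute hcu (Commute.all _ _)
  -- main contradiction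
  have key : ∀ s : ℕ, x ^ (p ^ s) * e ≠ x ^ (p ^ s + p ^ (l - 1) * (p - 1)) * e := by
    intro s h
    have hπeq : X ^ (p ^ s) = X ^ (p ^ s + p ^ (l - 1) * (p - 1)) := by
      rw [hXdef, ← map_pow, ← map_pow, hπdef]
      rw [Ideal.Quotient.eq, hmemI, sub_mul, h, sub_self]
    rw [pow_add] at hπeq
    have hXsu : IsUnit (X ^ (p ^ s)) := hXu.pow _
    have h1 : (1 : A ⧸ I) = X ^ (p ^ (l - 1) * (p - 1)) := by
      have := hπeq
      nth_rewrite 1 [← mul_one (X ^ (p ^ s))] at this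
      exact hXsu.mul_left_cancel this
    -- X ^ (p^(l-1)) = π c + n ^ (p^(l-1))
    have hXm : X ^ (p ^ (l - 1)) = π c + n ^ (p ^ (l - 1)) := by
      rw [hXn, add_pow_char_pow, ← map_pow, fix_pow_pow p c hcp]
    -- (X ^ p^(l-1)) ^ p = X ^ p^(l-1)
    have hmul : p ^ (l - 1) * (p - 1) + p ^ (l - 1) = p ^ (l - 1) * p := by
      have h1 : p - 1 + 1 = p := Nat.succ_pred_eq_of_pos hp.pos
      calc p ^ (l - 1) * (p - 1) + p ^ (l - 1)
          = p ^ (l - 1) * (p - 1 + 1) := by ring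
        _ = p ^ (l - 1) * p := by rw [h1]
    have hfixX : (X ^ (p ^ (l - 1))) ^ p = X ^ (p ^ (l - 1)) := by
      rw [← pow_mul, ← hmul, pow_add, ← h1, one_mul]
    set z : A ⧸ I := n ^ (p ^ (l - 1)) with hzdef
    have hz_fix : z ^ p = z := by
      have := hfixX
      rw [hXm] at this
      rw [add_pow_char] at this
      rw [← map_pow, hcp] at this
      exact add_left_cancel this
    have hz_nil : IsNilpotent z := by
      refine ⟨p ^ l', ?_⟩
      rw [hzdef, ← pow_mul]
      exact pow_eq_zero_of_le (Nat.le_mul_of_pos_left _ (Nat.pow_pos hp.pos)) hn_nil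
    exact hnm_ne (hz_fix ▸ nilp_fix_eq_zero p hp.one_lt z hz_nil hz_fix)
  intro s
  refine ⟨key s, ?_⟩
  intro h
  exact key s (by rw [h])
end
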